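/- Let ε > 0, δ > 0 and q ≥ 1 an integer, and let f₁, …, f_q : ℝ → ℝ be continuously differentiable functions with f_i'(y) > 0 for all y ∈ ℝ. Let z₀ ∈ ℝ, and set z_i = f_i(z_{i−1}) and λ_i = log f_i'(z_{i−1}) for 1 ≤ i ≤ q. Assume: (i) for each i ∈ {1,…,q} and every y ∈ ℝ with |y − z_{i−1}| ≤ δ one has |log f_i'(y) − λ_i| ≤ ε; and (ii) for every j with 1 ≤ j ≤ q one has λ₁ + ⋯ + λ_j + j·ε < 0. Then for every j with 1 ≤ j ≤ q, the composition F_j = f_j ∘ ⋯ ∘ f₁ satisfies, for every y ∈ [z₀ − δ, z₀ + δ]: |F_j(y) − z_j| ≤ δ and exp(λ₁ + ⋯ + λ_j − jε) ≤ F_j'(y) ≤ exp(λ₁ + ⋯ + λ_j + jε). In particular, the image F_q([z₀ − δ, z₀ + δ]) is an interval of length at most 2δ·exp(λ₁ + ⋯ + λ_q + qε). -/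

import Mathlib

open MeasureTheory

/-- `compFrom f i k = f_{i+k-1} ∘ ⋯ ∘ f_{i+1} ∘ f_i` is the composition of the `k`
consecutive maps starting at index `i` (the empty composition being the identity). -/
def compFrom (f : ℕ → ℝ → ℝ) (i : ℕ) : ℕ → ℝ → ℝ
  | 0 => id
  | k + 1 => f (i + k) ∘ compFrom f i k

/-- Composition-control lemma: a composition of maps whose logarithmic derivatives are
`ε`-controlled on `δ`-neighborhoods of the orbit `z_i = (f_i ∘ ⋯ ∘ f₁)(z₀)`, with
uniformly negative partial exponent sums `λ₁ + ⋯ + λ_j + jε < 0` where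
`λ_i = log f_i'(z_{i-1})`, stays `δ`-close to the orbit on `[z₀-δ, z₀+δ]` with two-sided
exponential derivative bounds; in particular the image of `[z₀-δ, z₀+δ]` under the full
composition has length at most `2δ·exp(λ₁+⋯+λ_q+qε)`. -/
theorem composition_contraction_control
    (ε δ : ℝ) (hε : 0 < ε) (hδ : 0 < δ) (q : ℕ) (hq : 1 ≤ q)
    (f : ℕ → ℝ → ℝ)
    (hC1 : ∀ i : ℕ, 1 ≤ i → i ≤ q → ContDiff ℝ 1 (f i))
    (hpos : ∀ i : ℕ, 1 ≤ i → i ≤ q → ∀ y : ℝ, 0 < deriv (f i) y)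
    (z₀ : ℝ)
    (hcontrol : ∀ i : ℕ, 1 ≤ i → i ≤ q → ∀ y : ℝ,
      |y - compFrom f 1 (i - 1) z₀| ≤ δ →
      |Real.log (deriv (f i) y) -
        Real.log (deriv (f i) (compFrom f 1 (i - 1) z₀))| ≤ ε)
    (hneg : ∀ j : ℕ, 1 ≤ j → j ≤ q →
      (∑ i ∈ Finset.Icc 1 j, Real.log (deriv (f i) (compFrom f 1 (i - 1) z₀))) +
        (j : ℝ) * ε < 0) :
    (∀ j : ℕ, 1 ≤ j → j ≤ q → ∀ y ∈ Set.Icc (z₀ - δ) (z₀ + δ),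
      |compFrom f 1 j y - compFrom f 1 j z₀| ≤ δ ∧
      Real.exp ((∑ i ∈ Finset.Icc 1 j,
          Real.log (deriv (f i) (compFrom f 1 (i - 1) z₀))) - (j : ℝ) * ε) ≤
        deriv (compFrom f 1 j) y ∧
      deriv (compFrom f 1 j) y ≤
        Real.exp ((∑ i ∈ Finset.Icc 1 j,
          Real.log (deriv (f i) (compFrom f 1 (i - 1) z₀))) + (j : ℝ) * ε)) ∧
    volume (compFrom f 1 q '' Set.Icc (z₀ - δ) (z₀ + δ)) ≤
      ENNReal.ofReal (2 * δ * Real.exp ((∑ i ∈ Finset.Icc 1 q,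
        Real.log (deriv (f i) (compFrom f 1 (i - 1) z₀))) + (q : ℝ) * ε)) := by
  set S : ℕ → ℝ := fun j => ∑ i ∈ Finset.Icc 1 j,
    Real.log (deriv (f i) (compFrom f 1 (i - 1) z₀)) with hSdef
  have hdiff : ∀ i, 1 ≤ i → i ≤ q → Differentiable ℝ (f i) := fun i h1 h2 =>
    (hC1 i h1 h2).differentiable one_ne_zero
  have hgdiff : ∀ j, j ≤ q → Differentiable ℝ (compFrom f 1 j) := by
    intro j
    induction j with
    | zero => intro _; exact differentiable_id
    | succ k ih =>
      intro hk
      show Differentiable ℝ (f (1 + k) ∘ compFrom f 1 k)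
      exact (hdiff (1 + k) (by omega) (by omega)).comp (ih (by omega))
  have hcomp : ∀ j : ℕ, ∀ x : ℝ,
      compFrom f 1 (j + 1) x = f (j + 1) (compFrom f 1 j x) := by
    intro j x
    show f (1 + j) (compFrom f 1 j x) = _
    rw [Nat.add_comm]
  have hderiv : ∀ k : ℕ, k + 1 ≤ q → ∀ y : ℝ,
      deriv (compFrom f 1 (k + 1)) y =
        deriv (f (k + 1)) (compFrom f 1 k y) * deriv (compFrom f 1 k) y := by
    intro k hk y
    have hck : compFrom f 1 (k + 1) = f (k + 1) ∘ compFrom f 1 k := funext (hcomp k)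
    rw [hck]
    exact deriv_comp (x := y)
      ((hdiff (k + 1) (by omega) (by omega)) (compFrom f 1 k y))
      ((hgdiff k (by omega)) y)
  have key : ∀ j : ℕ, j ≤ q → ∀ y ∈ Set.Icc (z₀ - δ) (z₀ + δ),
      |compFrom f 1 j y - compFrom f 1 j z₀| ≤ δ * Real.exp (S j + (j : ℝ) * ε) ∧
      Real.exp (S j - (j : ℝ) * ε) ≤ deriv (compFrom f 1 j) y ∧
      deriv (compFrom f 1 j) y ≤ Real.exp (S j + (j : ℝ) * ε) := by
    intro j
    induction j with
    | zero =>
      intro _ y hy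
      have hy' : |y - z₀| ≤ δ := abs_le.mpr ⟨by linarith [hy.1], by linarith [hy.2]⟩
      have hS0 : S 0 = 0 := by simp [hSdef]
      refine ⟨?_, ?_, ?_⟩
      · simpa [compFrom, hS0] using hy'
      · simp [compFrom, hS0]
      · simp [compFrom, hS0]
    | succ j ih =>
      intro hj y hy
      obtain ⟨ha, hl, hu⟩ := ih (by omega) y hy
      set a := compFrom f 1 j z₀ with hadef
      set b := compFrom f 1 j y with hbdef
      set lam := Real.log (deriv (f (j + 1)) a) with hlamdef
      have hSsucc : S (j + 1) = S j + lam := by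
        rw [hSdef]
        simp only
        rw [Finset.sum_Icc_succ_top (by omega : 1 ≤ j + 1)]
        congr 1
      have hle1 : Real.exp (S j + (j : ℝ) * ε) ≤ 1 := by
        rcases Nat.eq_zero_or_pos j with h0 | h0
        · subst h0; simp [hSdef]
        · have hneg' : S j + (j : ℝ) * ε < 0 := hneg j h0 (by omega)
          calc Real.exp (S j + (j : ℝ) * ε) ≤ Real.exp 0 :=
                Real.exp_le_exp.mpr hneg'.le
            _ = 1 := Real.exp_zero
      have hba : |b - a| ≤ δ :=
        ha.trans (mul_le_of_le_one_right hδ.le hle1)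
      have hfd : ∀ x : ℝ, |x - a| ≤ δ →
          Real.exp (lam - ε) ≤ deriv (f (j + 1)) x ∧
            deriv (f (j + 1)) x ≤ Real.exp (lam + ε) := by
        intro x hx
        have hc := hcontrol (j + 1) (by omega) (by omega) x hx
        rw [Nat.add_sub_cancel, ← hadef] at hc
        have hpx := hpos (j + 1) (by omega) (by omega) x
        obtain ⟨hc1, hc2⟩ := abs_le.mp hc
        constructor
        · calc Real.exp (lam - ε)
              ≤ Real.exp (Real.log (deriv (f (j + 1)) x)) :=
                Real.exp_le_exp.mpr (by linarith)
            _ = deriv (f (j + 1)) x := Real.exp_log hpx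
        · calc deriv (f (j + 1)) x
              = Real.exp (Real.log (deriv (f (j + 1)) x)) := (Real.exp_log hpx).symm
            _ ≤ Real.exp (lam + ε) := Real.exp_le_exp.mpr (by linarith)
      have hbmem := hfd b hba
      -- derivative bounds
      have hdc := hderiv j hj y
      have hFjpos : (0 : ℝ) ≤ deriv (compFrom f 1 j) y :=
        le_trans (Real.exp_pos _).le hl
      have hlow : Real.exp (lam - ε) * Real.exp (S j - (j : ℝ) * ε) ≤
          deriv (compFrom f 1 (j + 1)) y := by
        rw [hdc]
        exact mul_le_mul hbmem.1 hl (Real.exp_pos _).le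
          (hpos (j + 1) (by omega) (by omega) b).le
      have hhigh : deriv (compFrom f 1 (j + 1)) y ≤
          Real.exp (lam + ε) * Real.exp (S j + (j : ℝ) * ε) := by
        rw [hdc]
        exact mul_le_mul hbmem.2 hu hFjpos (Real.exp_pos _).le
      have elow : Real.exp (lam - ε) * Real.exp (S j - (j : ℝ) * ε) =
          Real.exp (S (j + 1) - ((j + 1 : ℕ) : ℝ) * ε) := by
        rw [← Real.exp_add, hSsucc]
        push_cast
        ring_nf
      have ehigh : Real.exp (lam + ε) * Real.exp (S j + (j : ℝ) * ε) =
          Real.exp (S (j + 1) + ((j + 1 : ℕ) : ℝ) * ε) := by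
        rw [← Real.exp_add, hSsucc]
        push_cast
        ring_nf
      refine ⟨?_, by rw [← elow]; exact hlow, by rw [← ehigh]; exact hhigh⟩
      -- distance bound via mean value inequality
      have himg : |compFrom f 1 (j + 1) y - compFrom f 1 (j + 1) z₀| ≤
          Real.exp (lam + ε) * |b - a| := by
        rw [hcomp j y, hcomp j z₀, ← hadef, ← hbdef]
        have hconv : Convex ℝ (Set.Icc (a - δ) (a + δ)) := convex_Icc _ _
        have hfderiv : ∀ x ∈ Set.Icc (a - δ) (a + δ),
            DifferentiableAt ℝ (f (j + 1)) x := fun x _ =>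
          (hdiff (j + 1) (by omega) (by omega)) x
        have hbound : ∀ x ∈ Set.Icc (a - δ) (a + δ),
            ‖deriv (f (j + 1)) x‖ ≤ Real.exp (lam + ε) := by
          intro x hx
          have hx' : |x - a| ≤ δ := abs_le.mpr ⟨by linarith [hx.1], by linarith [hx.2]⟩
          rw [Real.norm_eq_abs, abs_of_pos (hpos (j + 1) (by omega) (by omega) x)]
          exact (hfd x hx').2
        have hamem : a ∈ Set.Icc (a - δ) (a + δ) := by
          constructor <;> linarith
        have hbmem' : b ∈ Set.Icc (a - δ) (a + δ) := by
          obtain ⟨h1, h2⟩ := abs_le.mp hba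
          constructor <;> linarith
        have := hconv.norm_image_sub_le_of_norm_deriv_le hfderiv hbound hamem hbmem'
        simpa [Real.norm_eq_abs] using this
      calc |compFrom f 1 (j + 1) y - compFrom f 1 (j + 1) z₀|
          ≤ Real.exp (lam + ε) * |b - a| := himg
        _ ≤ Real.exp (lam + ε) * (δ * Real.exp (S j + (j : ℝ) * ε)) :=
            mul_le_mul_of_nonneg_left ha (Real.exp_pos _).le
        _ = δ * Real.exp (S (j + 1) + ((j + 1 : ℕ) : ℝ) * ε) := by
            rw [← ehigh]; ring
  constructor
  · intro j h1j hjq y hy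
    obtain ⟨ha, hl, hu⟩ := key j hjq y hy
    refine ⟨ha.trans ?_, hl, hu⟩
    have hle1 : Real.exp (S j + (j : ℝ) * ε) ≤ 1 := by
      calc Real.exp (S j + (j : ℝ) * ε) ≤ Real.exp 0 :=
            Real.exp_le_exp.mpr (hneg j h1j hjq).le
        _ = 1 := Real.exp_zero
    exact mul_le_of_le_one_right hδ.le hle1
  · set r := δ * Real.exp (S q + (q : ℝ) * ε) with hrdef
    have hsub : compFrom f 1 q '' Set.Icc (z₀ - δ) (z₀ + δ) ⊆
        Set.Icc (compFrom f 1 q z₀ - r) (compFrom f 1 q z₀ + r) := by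
      rintro _ ⟨y, hy, rfl⟩
      obtain ⟨h1, h2⟩ := abs_le.mp (key q le_rfl y hy).1
      constructor <;> [linarith; linarith]
    calc volume (compFrom f 1 q '' Set.Icc (z₀ - δ) (z₀ + δ))
        ≤ volume (Set.Icc (compFrom f 1 q z₀ - r) (compFrom f 1 q z₀ + r)) :=
          measure_mono hsub
      _ = ENNReal.ofReal (2 * δ * Real.exp (S q + (q : ℝ) * ε)) := by
          rw [Real.volume_Icc]
          congr 1
          rw [hrdef]
          ring
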